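/- For every n ∈ ℕ and all z: z · P_n(z; α, β) = P_{n+1}(z; α, β) + (d_n − b_n) · P_n(z; α−1, β+1). -/
import Mathlib


open Finset

/-- Pochhammer symbol `(a)_k = a (a+1) ⋯ (a+k-1)`. -/
noncomputable def poch (a : ℝ) (k : ℕ) : ℝ := ∏ i ∈ Finset.range k, (a + (i : ℝ))

/-- The Hendriksen–van Rossum polynomial `P_n(z; α, β)`. -/
noncomputable def HR (α β : ℝ) (n : ℕ) (z : ℝ) : ℝ :=
  (poch β n / poch (α + 1) n) *
    ∑ k ∈ Finset.range (n + 1),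
      poch (-(n : ℝ)) k * poch (α + 1) k /
          (poch (1 - β - (n : ℝ)) k * (Nat.factorial k : ℝ)) * z ^ k

/-- `d_m(α,β) = −(m+β)/(m+α+1)`. -/
noncomputable def dco (α β m : ℝ) : ℝ := -(m + β) / (m + α + 1)

/-- `b_m(α,β) = −m(m+α+β)/((m+α)(m+α+1))`. -/
noncomputable def bco (α β m : ℝ) : ℝ := -(m * (m + α + β)) / ((m + α) * (m + α + 1))

lemma poch_zero (a : ℝ) : poch a 0 = 1 := by simp [poch]
lemma poch_succ (a : ℝ) (k : ℕ) : poch a (k+1) = poch a k * (a + k) := by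
  simp [poch, Finset.prod_range_succ]
lemma poch_succ' (a : ℝ) (k : ℕ) : poch a (k+1) = a * poch (a+1) k := by
  rw [poch, Finset.prod_range_succ']
  rw [show (∏ i ∈ Finset.range k, (a + ((i+1 : ℕ) : ℝ))) = poch (a+1) k from
    Finset.prod_congr rfl fun i _ => by push_cast; ring]
  push_cast; ring
lemma poch_ne_zero {a : ℝ} (h : ∀ i : ℕ, a + i ≠ 0) (k : ℕ) : poch a k ≠ 0 :=
  Finset.prod_ne_zero_iff.mpr fun i _ => h i
lemma poch_neg_self (n : ℕ) : poch (-(n : ℝ)) (n+1) = 0 :=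
  Finset.prod_eq_zero (Finset.self_mem_range_succ n) (by ring)

noncomputable def co (α β : ℝ) (n k : ℕ) : ℝ :=
  poch β n / poch (α + 1) n *
    (poch (-(n : ℝ)) k * poch (α + 1) k /
      (poch (1 - β - (n : ℝ)) k * (Nat.factorial k : ℝ)))

lemma HR_eq (α β : ℝ) (n : ℕ) (z : ℝ) :
    HR α β n z = ∑ k ∈ Finset.range (n+1), co α β n k * z^k := by
  rw [HR, Finset.mul_sum]
  exact Finset.sum_congr rfl fun k _ => by rw [co]; ring


set_option maxHeartbeats 2000000 in
/-- `z · P_n(z; α, β) = P_{n+1}(z; α, β) + (d_n − b_n) · P_n(z; α−1, β+1)`. -/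
theorem stmt6 (α β : ℝ)
    (hα : ∀ m : ℤ, α ≠ (m : ℝ)) (hβ : ∀ m : ℤ, β ≠ (m : ℝ))
    (hαβ : ∀ m : ℤ, α + β ≠ (m : ℝ))
    (n : ℕ) (z : ℝ) :
    z * HR α β n z
      = HR α β (n + 1) z
        + (dco α β (n : ℝ) - bco α β (n : ℝ)) * HR (α - 1) (β + 1) n z := by
  have hβ0 : β ≠ 0 := by simpa using hβ 0
  have hα0 : α ≠ 0 := by simpa using hα 0
  have hαn : α + (n:ℝ) ≠ 0 := fun h => hα (-n) (by push_cast; linarith)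
  have hnα : (n:ℝ) + α ≠ 0 := fun h => hα (-n) (by push_cast; linarith)
  have hnα1 : (n:ℝ) + α + 1 ≠ 0 := fun h => hα (-(n+1)) (by push_cast; linarith)
  have hα1n : α + 1 + (n:ℝ) ≠ 0 := fun h => hα (-(n+1)) (by push_cast; linarith)
  have hmb : -β - (n:ℝ) ≠ 0 := fun h => hβ (-n) (by push_cast; linarith)
  have hQ : ∀ N : ℕ, poch (α+1) N ≠ 0 := fun N => poch_ne_zero
    (fun i h => hα (-(1+i)) (by push_cast; linarith)) N
  have hQ0 : ∀ N : ℕ, poch α N ≠ 0 := fun N => poch_ne_zero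
    (fun i h => hα (-i) (by push_cast; linarith)) N
  have hT : ∀ N : ℕ, poch (1 - β - (n:ℝ)) N ≠ 0 := fun N => poch_ne_zero
    (fun i h => hβ (1 - n + i) (by push_cast; linarith)) N
  have hb1 : poch (β+1) n = poch β n * (β + (n:ℝ)) / β := by
    have h1 : β * poch (β+1) n = poch β n * (β + (n:ℝ)) := by
      rw [← poch_succ', poch_succ]
    rw [eq_div_iff hβ0]; linarith [h1]
  have ha0 : poch α n = α * poch (α+1) n / (α + (n:ℝ)) := by
    have h1 : α * poch (α+1) n = poch α n * (α + (n:ℝ)) := by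
      rw [← poch_succ', poch_succ]
    rw [eq_div_iff hαn]; linarith [h1]
  have key : ∀ k, k ≤ n →
      co α β n k = co α β (n+1) (k+1)
        + (dco α β (n : ℝ) - bco α β (n : ℝ)) * co (α-1) (β+1) n (k+1) := by
    intro k hk
    have hk1 : ((k:ℝ)+1) ≠ 0 := by positivity
    have hF : ((Nat.factorial k : ℕ) : ℝ) ≠ 0 := by
      exact_mod_cast Nat.factorial_ne_zero k
    have e1 : poch (-((n:ℝ)+1)) (k+1) = (-(n:ℝ)-1) * poch (-(n:ℝ)) k := by
      have h := poch_succ' (-((n:ℝ)+1)) k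
      rw [show (-((n:ℝ)+1)+1) = -(n:ℝ) from by ring] at h
      rw [h]; ring
    have e2 : poch (1 - β - ((n:ℝ)+1)) (k+1) = (-β - (n:ℝ)) * poch (1-β-(n:ℝ)) k := by
      have h := poch_succ' (1 - β - ((n:ℝ)+1)) k
      rw [show (1 - β - ((n:ℝ)+1)+1) = 1-β-(n:ℝ) from by ring] at h
      rw [h]; ring
    have e3 : poch (1 - (β+1) - (n:ℝ)) (k+1) = (-β - (n:ℝ)) * poch (1-β-(n:ℝ)) k := by
      have h := poch_succ' (1 - (β+1) - (n:ℝ)) k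
      rw [show (1 - (β+1) - (n:ℝ)+1) = 1-β-(n:ℝ) from by ring] at h
      rw [h]; ring
    have e6 : poch (α-1+1) (k+1) = α * poch (α+1) k := by
      rw [sub_add_cancel, poch_succ']
    have e7 : poch (α-1+1) n = poch α n := by rw [sub_add_cancel]
    simp only [co]
    push_cast [Nat.factorial_succ]
    rw [e1, e2, e3, e6, e7, poch_succ (-(n:ℝ)) k, poch_succ (α+1) k,
      poch_succ β n, poch_succ (α+1) n, hb1, ha0]
    simp only [dco, bco]
    generalize hgP : poch β n = P
    generalize hgQ : poch (α+1) n = Q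
    generalize hgR : poch (-(n:ℝ)) k = R
    generalize hgS : poch (α+1) k = S
    generalize hgT : poch (1-β-(n:ℝ)) k = T
    have hQ' : Q ≠ 0 := hgQ ▸ hQ n
    have hT' : T ≠ 0 := hgT ▸ hT k
    generalize hgF : ((Nat.factorial k : ℕ) : ℝ) = F at hF ⊢
    generalize hgx : (n:ℝ) = x at hαn hnα hnα1 hα1n hmb ⊢
    generalize hgy : (k:ℝ) = y at hk1 ⊢
    field_simp [hβ0, hα0, hQ', hT', hF, hαn, hnα, hnα1, hα1n, hmb, hk1]
    ring
  have key0 : 0 = co α β (n+1) 0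
        + (dco α β (n : ℝ) - bco α β (n : ℝ)) * co (α-1) (β+1) n 0 := by
    simp only [co, poch_zero, Nat.factorial_zero, Nat.cast_one]
    rw [sub_add_cancel, poch_succ β n, poch_succ (α+1) n, hb1, ha0]
    push_cast
    simp only [dco, bco]
    generalize hgP : poch β n = P
    generalize hgQ : poch (α+1) n = Q
    have hQ' : Q ≠ 0 := hgQ ▸ hQ n
    generalize hgx : (n:ℝ) = x at hαn hnα hnα1 hα1n hmb ⊢
    field_simp [hβ0, hα0, hQ', hαn, hnα, hnα1, hα1n, hmb]
    ring
  have hcon : co (α-1) (β+1) n (n+1) = 0 := by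
    rw [co, poch_neg_self]; ring
  rw [HR_eq, HR_eq, HR_eq, Finset.mul_sum, Finset.mul_sum]
  have hext : ∑ i ∈ Finset.range (n+1),
        (dco α β (n : ℝ) - bco α β (n : ℝ)) * (co (α-1) (β+1) n i * z ^ i)
      = ∑ i ∈ Finset.range (n+1+1),
        (dco α β (n : ℝ) - bco α β (n : ℝ)) * (co (α-1) (β+1) n i * z ^ i) := by
    rw [Finset.sum_range_succ _ (n+1)]
    simp [hcon]
  rw [hext, ← Finset.sum_add_distrib]
  rw [show (∑ i ∈ Finset.range (n+1), z * (co α β n i * z ^ i))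
      = ∑ j ∈ Finset.range (n+1+1), (if j = 0 then 0 else co α β n (j-1)) * z ^ j from by
    rw [Finset.sum_range_succ' (fun j => (if j = 0 then (0:ℝ) else co α β n (j-1)) * z ^ j) (n+1)]
    rw [if_pos rfl, zero_mul, add_zero]
    refine Finset.sum_congr rfl fun k _ => ?_
    rw [if_neg (Nat.succ_ne_zero k), Nat.add_sub_cancel]
    ring]
  refine Finset.sum_congr rfl fun j hj => ?_
  rcases j with _ | k
  · rw [if_pos rfl, zero_mul]
    simp only [pow_zero, mul_one]
    exact key0
  · have hk : k ≤ n := by simpa using Nat.lt_succ_iff.mp (by simpa using Finset.mem_range.mp hj)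
    simp only [Nat.succ_ne_zero, if_false, Nat.succ_sub_one]
    rw [key k hk]; ring
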